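/- Let c be a positive integer and let A be a real c×c matrix whose off-diagonal entries are nonpositive (A i j ≤ 0 for i ≠ j), whose row sums are all zero (∀ i, ∑ j, A i j = 0) and whose column sums are all zero (∀ j, ∑ i, A i j = 0). Then for every vector γ : Fin c → ℝ one has γ ⬝ᵥ (A *ᵥ (fun i => Real.exp (γ i))) ≥ 0. -/
import Mathlib


open Matrix

theorem balanced_laplacian_dissipation
    (c : ℕ) (hc : 0 < c) (A : Matrix (Fin c) (Fin c) ℝ)
    (hoff : ∀ i j, i ≠ j → A i j ≤ 0)
    (hrow : ∀ i, ∑ j, A i j = 0)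
    (hcol : ∀ j, ∑ i, A i j = 0) :
    ∀ γ : Fin c → ℝ, γ ⬝ᵥ (A *ᵥ (fun i => Real.exp (γ i))) ≥ 0 := by
  intro γ
  have expand : γ ⬝ᵥ (A *ᵥ fun i => Real.exp (γ i))
      = ∑ i, ∑ j, γ i * (A i j * Real.exp (γ j)) := by
    simp [dotProduct, mulVec, Finset.mul_sum]
  have h1 : ∑ i, ∑ j, A i j * ((γ j - 1) * Real.exp (γ j)) = 0 := by
    rw [Finset.sum_comm]
    refine Finset.sum_eq_zero fun j _ => ?_
    rw [← Finset.sum_mul, hcol, zero_mul]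
  have h2 : ∑ i, ∑ j, A i j * Real.exp (γ i) = 0 := by
    refine Finset.sum_eq_zero fun i _ => ?_
    rw [← Finset.sum_mul, hrow, zero_mul]
  have key : γ ⬝ᵥ (A *ᵥ fun i => Real.exp (γ i))
      = ∑ i, ∑ j, A i j * ((γ i - γ j + 1) * Real.exp (γ j) - Real.exp (γ i)) := by
    rw [expand]
    have : ∀ i j : Fin c, γ i * (A i j * Real.exp (γ j))
        = A i j * ((γ i - γ j + 1) * Real.exp (γ j) - Real.exp (γ i))
          + A i j * ((γ j - 1) * Real.exp (γ j)) + A i j * Real.exp (γ i) := by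
      intro i j; ring
    simp only [this, Finset.sum_add_distrib, h1, h2, add_zero]
  rw [key]
  refine Finset.sum_nonneg fun i _ => Finset.sum_nonneg fun j _ => ?_
  by_cases h : i = j
  · subst h; simp
  · have hb : (γ i - γ j + 1) * Real.exp (γ j) - Real.exp (γ i) ≤ 0 := by
      rw [sub_nonpos]
      calc (γ i - γ j + 1) * Real.exp (γ j)
        ≤ Real.exp (γ i - γ j) * Real.exp (γ j) :=
          mul_le_mul_of_nonneg_right (Real.add_one_le_exp _) (Real.exp_pos _).le
        _ = Real.exp (γ i) := by rw [← Real.exp_add]; ring_nf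
    nlinarith [hoff i j h]
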